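/- The integral of (ln x)·(ln(1-x)) over the interval (0,1) equals 2 - π²/6. -/

import Mathlib

open Real MeasureTheory

lemma aux_cont (m : ℕ) : Continuous (fun x : ℝ => x ^ (m+1) * Real.log x) := by
  have : (fun x : ℝ => x ^ (m+1) * Real.log x) = fun x : ℝ => x ^ m * (x * Real.log x) := by
    funext x; ring
  rw [this]
  exact (continuous_pow m).mul Real.continuous_mul_log

lemma aux_ftc (m : ℕ) : ∫ x in (0:ℝ)..1, x ^ (m+1) * Real.log x = -(1/(m+2)^2) := by
  have hF : ∀ x ∈ Set.Ioo (0:ℝ) 1, HasDerivAt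
      (fun x : ℝ => x^(m+2) * Real.log x / (m+2) - x^(m+2) / (m+2)^2)
      (x ^ (m+1) * Real.log x) x := by
    intro x hx
    have hx0 : x ≠ 0 := ne_of_gt hx.1
    have h1 : HasDerivAt (fun x : ℝ => x^(m+2)) ((m+2) * x^(m+1)) x := by
      simpa using hasDerivAt_pow (m+2) x
    have h2 : HasDerivAt Real.log x⁻¹ x := Real.hasDerivAt_log hx0
    have := ((h1.mul h2).div_const ((m:ℝ)+2)).sub (h1.div_const (((m:ℝ)+2)^2))
    have h3 : x ^ (m+1) * Real.log x = (((m:ℝ) + 2) * x ^ (m + 1) * Real.log x + x ^ (m + 2) * x⁻¹) / ((m:ℝ) + 2) - ((m:ℝ) + 2) * x ^ (m + 1) / ((m:ℝ) + 2) ^ 2 := by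
      field_simp
      ring
    rw [h3]; exact this
  have hcont : ContinuousOn (fun x : ℝ => x^(m+2) * Real.log x / (m+2) - x^(m+2) / (m+2)^2)
      (Set.Icc 0 1) := by
    apply Continuous.continuousOn
    have : (fun x : ℝ => x^(m+2) * Real.log x / (m+2) - x^(m+2) / (m+2)^2)
        = fun x : ℝ => (x^(m+1) * Real.log x) * x / (m+2) - x^(m+2) / (m+2)^2 := by
      funext x; ring_nf
    rw [this]
    exact (((aux_cont m).mul continuous_id).div_const _).sub
      ((continuous_pow (m+2)).div_const _)
  have := intervalIntegral.integral_eq_sub_of_hasDeriv_right_of_le (by norm_num : (0:ℝ) ≤ 1) hcont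
    (fun x hx => (hF x hx).hasDerivWithinAt) ((aux_cont m).intervalIntegrable 0 1)
  rw [this]
  norm_num

lemma aux_ioo (m : ℕ) : ∫ x in Set.Ioo (0:ℝ) 1, Real.log x * x ^ (m+1) = -(1/(m+2)^2) := by
  have h1 : ∫ x in Set.Ioo (0:ℝ) 1, Real.log x * x ^ (m+1)
      = ∫ x in Set.Ioc (0:ℝ) 1, Real.log x * x ^ (m+1) :=
    (MeasureTheory.integral_Ioc_eq_integral_Ioo).symm
  rw [h1, ← intervalIntegral.integral_of_le (by norm_num : (0:ℝ) ≤ 1)]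
  rw [← aux_ftc m]
  congr 1; funext x; ring

lemma aux_summable : Summable (fun n : ℕ => 1/(((n:ℝ)+1) * ((n:ℝ)+2)^2)) := by
  have h : Summable (fun n : ℕ => 1/((n:ℝ)+1)^2) := by
    have := (summable_nat_add_iff 1).mpr (Real.summable_one_div_nat_pow.mpr one_lt_two)
    simpa using this
  apply h.of_nonneg_of_le
  · intro n; positivity
  · intro n
    apply div_le_div_of_nonneg_left (by norm_num) (by positivity)
    have h2 : ((n:ℝ)+1)^2 ≤ ((n:ℝ)+2)^2 := by nlinarith [Nat.cast_nonneg (α := ℝ) n]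
    nlinarith [Nat.cast_nonneg (α := ℝ) n]

lemma aux_hasSum : HasSum (fun n : ℕ => 1/(((n:ℝ)+1) * ((n:ℝ)+2)^2)) (2 - Real.pi^2/6) := by
  have htel : HasSum (fun n : ℕ => 1/((n:ℝ)+1) - 1/((n:ℝ)+2)) 1 := by
    rw [hasSum_iff_tendsto_nat_of_nonneg]
    · have heq : ∀ n : ℕ, ∑ i ∈ Finset.range n, (1/((i:ℝ)+1) - 1/((i:ℝ)+2)) = 1 - 1/((n:ℝ)+1) := by
        intro n
        induction n with
        | zero => simp
        | succ k ih =>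
          rw [Finset.sum_range_succ, ih]
          push_cast
          field_simp
          ring
      simp_rw [heq]
      have : Filter.Tendsto (fun n : ℕ => 1/((n:ℝ)+1)) Filter.atTop (nhds 0) :=
        tendsto_one_div_add_atTop_nhds_zero_nat
      simpa using (tendsto_const_nhds (x := (1:ℝ))).sub this
    · intro n
      have : ((n:ℝ)+1) ≤ ((n:ℝ)+2) := by linarith
      have h1 : (0:ℝ) < (n:ℝ)+1 := by positivity
      have h2 : (0:ℝ) < (n:ℝ)+2 := by positivity
      have := one_div_le_one_div_of_le h1 this
      linarith
  have hz : HasSum (fun n : ℕ => 1/((n:ℝ)+2)^2) (Real.pi^2/6 - 1) := by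
    have h0 := hasSum_zeta_two
    have := (hasSum_nat_add_iff' (f := fun n : ℕ => (1:ℝ)/(n:ℝ)^2) 2).mpr h0
    simp only [Finset.sum_range_succ, Finset.sum_range_zero] at this
    norm_num at this
    simpa [one_div] using this
  have key := htel.sub hz
  have heq : (fun n : ℕ => (1/((n:ℝ)+1) - 1/((n:ℝ)+2)) - 1/((n:ℝ)+2)^2)
      = fun n : ℕ => 1/(((n:ℝ)+1) * ((n:ℝ)+2)^2) := by
    funext n
    have h1 : ((n:ℝ)+1) ≠ 0 := by positivity
    have h2 : ((n:ℝ)+2) ≠ 0 := by positivity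
    field_simp
    ring
  rw [heq] at key
  rw [show (2:ℝ) - Real.pi^2/6 = 1 - (Real.pi^2/6 - 1) by ring]
  exact key

theorem stmt_0 :
    ∫ x in Set.Ioo (0:ℝ) 1, Real.log x * Real.log (1 - x) = 2 - Real.pi ^ 2 / 6 := by
  set F : ℕ → ℝ → ℝ := fun n x => Real.log x * (x ^ (n+1) / ((n:ℝ)+1)) with hFdef
  have hFc : ∀ n, Continuous (F n) := by
    intro n
    have : F n = fun x : ℝ => (x ^ (n+1) * Real.log x) / ((n:ℝ)+1) := by
      funext x; simp only [hFdef]; ring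
    rw [this]; exact (aux_cont n).div_const _
  have hFint : ∀ n, IntegrableOn (F n) (Set.Ioo (0:ℝ) 1) := fun n =>
    ((hFc n).integrableOn_Icc (a := 0) (b := 1)).mono_set Set.Ioo_subset_Icc_self
  have hFval : ∀ n, ∫ x in Set.Ioo (0:ℝ) 1, F n x
      = -(1/(((n:ℝ)+1) * ((n:ℝ)+2)^2)) := by
    intro n
    have : F n = fun x : ℝ => (((n:ℝ)+1))⁻¹ • (Real.log x * x ^ (n+1)) := by
      funext x; simp only [hFdef, smul_eq_mul]; ring
    rw [this, MeasureTheory.integral_smul, aux_ioo n, smul_eq_mul]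
    have h1 : ((n:ℝ)+1) ≠ 0 := by positivity
    have h2 : ((n:ℝ)+2) ≠ 0 := by positivity
    field_simp
  have hnorm : ∀ n, ∫ x in Set.Ioo (0:ℝ) 1, ‖F n x‖
      = 1/(((n:ℝ)+1) * ((n:ℝ)+2)^2) := by
    intro n
    have heq : ∀ x ∈ Set.Ioo (0:ℝ) 1, ‖F n x‖ = -(F n x) := by
      intro x hx
      rw [Real.norm_eq_abs, abs_of_nonpos]
      apply mul_nonpos_of_nonpos_of_nonneg
      · exact Real.log_nonpos (le_of_lt hx.1) (le_of_lt hx.2)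
      · have hx0 : (0:ℝ) ≤ x := le_of_lt hx.1
        positivity
    rw [MeasureTheory.setIntegral_congr_fun measurableSet_Ioo heq,
      MeasureTheory.integral_neg, hFval n]
    ring
  have hsum : Summable fun n => ∫ x in Set.Ioo (0:ℝ) 1, ‖F n x‖ := by
    simp_rw [hnorm]; exact aux_summable
  have key := MeasureTheory.integral_tsum_of_summable_integral_norm hFint hsum
  have hlhs : ∑' n, ∫ x in Set.Ioo (0:ℝ) 1, F n x = -(2 - Real.pi^2/6) := by
    simp_rw [hFval]
    rw [tsum_neg, aux_hasSum.tsum_eq]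
  have hrhs : ∫ x in Set.Ioo (0:ℝ) 1, ∑' n, F n x
      = -∫ x in Set.Ioo (0:ℝ) 1, Real.log x * Real.log (1 - x) := by
    rw [← MeasureTheory.integral_neg]
    apply MeasureTheory.setIntegral_congr_fun measurableSet_Ioo
    intro x hx
    have habs : |x| < 1 := abs_lt.mpr ⟨by linarith [hx.1], hx.2⟩
    have h := (hasSum_pow_div_log_of_abs_lt_one habs).mul_left (Real.log x)
    simp only [hFdef]
    rw [h.tsum_eq]
    ring
  rw [hlhs, hrhs] at key
  linarith
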